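/- For the random walk on a connected weighted undirected graph G with transition matrix T = (diag(W1))^{-1}W, the commute time matrix satisfies C = (Σ_{k,t} w_kt)·Ω, where Ω is the matrix of effective resistances of G. -/
import Mathlib


open Finset Relation Matrix
open scoped Classical

/-- `T` is a (row-)stochastic matrix. -/
def IsStochastic {n : ℕ} (T : Matrix (Fin n) (Fin n) ℝ) : Prop :=
  (∀ i j, 0 ≤ T i j) ∧ ∀ i, ∑ j, T i j = 1

/-- Irreducibility of a Markov chain: every state leads to every state. -/
def IsIrreducibleMC {n : ℕ} (T : Matrix (Fin n) (Fin n) ℝ) : Prop :=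
  ∀ i j, Relation.TransGen (fun a b => 0 < T a b) i j

/-- `pi` is the stationary distribution of `T`. -/
def IsStationaryDist {n : ℕ} (T : Matrix (Fin n) (Fin n) ℝ) (pi : Fin n → ℝ) : Prop :=
  (∀ i, 0 ≤ pi i) ∧ (∑ i, pi i) = 1 ∧ ∀ j, ∑ i, pi i * T i j = pi j

/-- The step relation of a set `A` of arcs. -/
def arcStep {n : ℕ} (A : Finset (Fin n × Fin n)) (x y : Fin n) : Prop := (x, y) ∈ A

/-- `A` is an in-forest: no loops, out-degree at most one, and no directed cycles;
equivalently, every weak component is a converging tree. -/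
def IsInForest {n : ℕ} (A : Finset (Fin n × Fin n)) : Prop :=
  (∀ a ∈ A, a.1 ≠ a.2) ∧
  (∀ v : Fin n, (A.filter fun a => a.1 = v).card ≤ 1) ∧
  ∀ v : Fin n, ¬ Relation.TransGen (arcStep A) v v

/-- `j` is a root (no outgoing arc) of the arc set `A`. -/
def IsRootOf {n : ℕ} (A : Finset (Fin n × Fin n)) (j : Fin n) : Prop := ∀ a ∈ A, a.1 ≠ j

/-- In the in-forest `A`, vertex `i` belongs to the tree converging to the root `j`. -/
def InTreeOf {n : ℕ} (A : Finset (Fin n × Fin n)) (i j : Fin n) : Prop :=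
  IsRootOf A j ∧ Relation.ReflTransGen (arcStep A) i j

/-- The weight of an arc set: the product of its arc weights. -/
noncomputable def digraphWeight {n : ℕ} (W : Matrix (Fin n) (Fin n) ℝ)
    (A : Finset (Fin n × Fin n)) : ℝ :=
  ∏ a ∈ A, W a.1 a.2

/-- Total weight of the in-forests satisfying the predicate `P`. -/
noncomputable def forestWeight {n : ℕ} (W : Matrix (Fin n) (Fin n) ℝ)
    (P : Finset (Fin n × Fin n) → Prop) : ℝ :=
  ∑ A : Finset (Fin n × Fin n), if IsInForest A ∧ P A then digraphWeight W A else 0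

/-- `σ_k`: total weight of in-forests with `k` arcs. -/
noncomputable def sigmaF {n : ℕ} (W : Matrix (Fin n) (Fin n) ℝ) (k : ℕ) : ℝ :=
  forestWeight W fun A => A.card = k

/-- `q^(k)_{ij}`: total weight of in-forests with `k` arcs in which vertex `i`
belongs to the tree converging to `j`. -/
noncomputable def qF {n : ℕ} (W : Matrix (Fin n) (Fin n) ℝ) (k : ℕ) (i j : Fin n) : ℝ :=
  forestWeight W fun A => A.card = k ∧ InTreeOf A i j

/-- `q_j`: total weight of spanning trees converging to `j`. -/
noncomputable def treeW {n : ℕ} (W : Matrix (Fin n) (Fin n) ℝ) (j : Fin n) : ℝ :=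
  qF W (n - 1) j j

/-- `f_{ij}`: total weight of 2-tree in-forests having one tree containing `i`
and the other tree converging to `j`. -/
noncomputable def fF {n : ℕ} (W : Matrix (Fin n) (Fin n) ℝ) (i j : Fin n) : ℝ :=
  forestWeight W fun A =>
    A.card = n - 2 ∧ IsRootOf A j ∧ ¬ Relation.ReflTransGen (arcStep A) i j

/-- `X` is the group inverse of `L`. -/
def IsGroupInverse {n : ℕ} (L X : Matrix (Fin n) (Fin n) ℝ) : Prop :=
  L * X * L = L ∧ X * L * X = X ∧ L * X = X * L

/-- `M` is the matrix of mean first passage times (with `M j j` the mean return time):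
the standard first-step equations. -/
def IsMFPTMatrix {n : ℕ} (T M : Matrix (Fin n) (Fin n) ℝ) : Prop :=
  ∀ i j, M i j = 1 + ∑ k ∈ Finset.univ.filter (fun k => k ≠ j), T i k * M k j

/-- `m` is the hitting-time function with `m i i = 0`. -/
def IsHittingTime {n : ℕ} (T : Matrix (Fin n) (Fin n) ℝ) (m : Fin n → Fin n → ℝ) : Prop :=
  (∀ i, m i i = 0) ∧ ∀ i j, i ≠ j → m i j = 1 + ∑ k, T i k * m k j

/-- The Laplacian matrix of the weight matrix `W`. -/
noncomputable def lap {n : ℕ} (W : Matrix (Fin n) (Fin n) ℝ) : Matrix (Fin n) (Fin n) ℝ :=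
  Matrix.diagonal (fun i => ∑ j, W i j) - W

/-- The (undirected) step relation of a canonically oriented edge set. -/
def edgeStep {n : ℕ} (A : Finset (Fin n × Fin n)) (x y : Fin n) : Prop :=
  (x, y) ∈ A ∨ (y, x) ∈ A

/-- Every pair in `A` is canonically oriented, so `A` encodes a set of undirected edges. -/
def IsEdgeSet {n : ℕ} (A : Finset (Fin n × Fin n)) : Prop := ∀ a ∈ A, a.1 < a.2

/-- `A` is a spanning tree of the undirected graph on `Fin n`:
`n - 1` edges and connected. -/
def IsSpanningTreeU {n : ℕ} (A : Finset (Fin n × Fin n)) : Prop :=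
  IsEdgeSet A ∧ A.card = n - 1 ∧ ∀ u v : Fin n, Relation.ReflTransGen (edgeStep A) u v

/-- `A` is a 2-tree spanning forest of the undirected graph on `Fin n`
having `i` and `j` in different trees. -/
def IsTwoForestSep {n : ℕ} (A : Finset (Fin n × Fin n)) (i j : Fin n) : Prop :=
  IsEdgeSet A ∧ A.card = n - 2 ∧ ¬ Relation.ReflTransGen (edgeStep A) i j ∧
    ∀ v : Fin n, Relation.ReflTransGen (edgeStep A) v i ∨ Relation.ReflTransGen (edgeStep A) v j

/-- Total weight of the edge sets satisfying `P` (weights of forests are products of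
edge weights; weights of sets of forests are sums). -/
noncomputable def uWeightSum {n : ℕ} (W : Matrix (Fin n) (Fin n) ℝ)
    (P : Finset (Fin n × Fin n) → Prop) : ℝ :=
  ∑ A : Finset (Fin n × Fin n), if P A then digraphWeight W A else 0

/-- The weighted undirected graph with weight matrix `W` is connected. -/
def IsConnectedW {n : ℕ} (W : Matrix (Fin n) (Fin n) ℝ) : Prop :=
  ∀ i j : Fin n, Relation.ReflTransGen (fun a b => 0 < W a b) i j

lemma lap_mulVec {n : ℕ} (W : Matrix (Fin n) (Fin n) ℝ) (x : Fin n → ℝ) (i : Fin n) :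
    (lap W).mulVec x i = (∑ k, W i k) * x i - ∑ k, W i k * x k := by
  simp only [lap, Matrix.mulVec, dotProduct, Matrix.sub_apply, Matrix.diagonal_apply,
    sub_mul, Finset.sum_sub_distrib, ite_mul, zero_mul]
  rw [Finset.sum_ite_eq Finset.univ i fun k => (∑ j, W i j) * x k]
  simp

lemma ker_const {n : ℕ} (W : Matrix (Fin n) (Fin n) ℝ) (hsym : ∀ i j, W i j = W j i)
    (hnn : ∀ i j, 0 ≤ W i j) (hconn : IsConnectedW W)
    (x : Fin n → ℝ) (hx : (lap W).mulVec x = 0) : ∀ a b, x a = x b := by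
  have h1 : ∀ i, (∑ k, W i k) * x i = ∑ k, W i k * x k := by
    intro i
    have h := congrFun hx i
    rw [lap_mulVec] at h
    simp only [Pi.zero_apply] at h
    linarith
  have hS : ∑ i, ∑ k, W i k * (x i - x k)^2 = 0 := by
    have e1 : ∀ i, ∑ k, W i k * (x i - x k)^2
        = -((∑ k, W i k) * x i ^ 2) + ∑ k, W i k * x k ^ 2 := by
      intro i
      have : ∑ k, W i k * (x i - x k)^2
          = (∑ k, W i k) * x i ^ 2 - 2 * x i * (∑ k, W i k * x k) + ∑ k, W i k * x k ^ 2 := by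
        rw [Finset.sum_mul, Finset.mul_sum, ← Finset.sum_sub_distrib, ← Finset.sum_add_distrib]
        exact Finset.sum_congr rfl fun k _ => by ring
      rw [this, ← h1 i]; ring
    rw [Finset.sum_congr rfl (fun i _ => e1 i), Finset.sum_add_distrib]
    have e2 : ∑ i, ∑ k, W i k * x k ^ 2 = ∑ i, (∑ k, W i k) * x i ^ 2 := by
      rw [Finset.sum_comm]
      apply Finset.sum_congr rfl
      intro k _
      rw [Finset.sum_mul]
      exact Finset.sum_congr rfl fun i _ => by rw [hsym]
    rw [e2, Finset.sum_neg_distrib]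
    ring
  have hterm : ∀ i k, W i k * (x i - x k)^2 = 0 := by
    have h' := (Finset.sum_eq_zero_iff_of_nonneg (fun i _ =>
      Finset.sum_nonneg fun k _ => mul_nonneg (hnn i k) (sq_nonneg _))).mp hS
    intro i k
    have h'' := (Finset.sum_eq_zero_iff_of_nonneg (fun k _ =>
      mul_nonneg (hnn i k) (sq_nonneg _))).mp (h' i (Finset.mem_univ i)) k (Finset.mem_univ k)
    exact h''
  have hstep : ∀ i k, 0 < W i k → x i = x k := by
    intro i k hw
    have := hterm i k
    have h2 : (x i - x k)^2 = 0 := by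
      rcases mul_eq_zero.mp this with h | h
      · exact absurd h (ne_of_gt hw)
      · exact h
    have := pow_eq_zero_iff (n := 2) (by norm_num) |>.mp h2
    linarith
  intro a b
  induction hconn a b with
  | refl => rfl
  | tail _ hstep' ih => exact ih.trans (hstep _ _ hstep')



lemma LY_apply {n : ℕ} (W Y : Matrix (Fin n) (Fin n) ℝ) (hsym : ∀ i j, W i j = W j i)
    (hnn : ∀ i j, 0 ≤ W i j) (hconn : IsConnectedW W) (hY : IsGroupInverse (lap W) Y) :
    ∃ c : Fin n → ℝ, ∀ k i, (lap W * Y) i k = (if i = k then 1 else 0) + c k := by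
  have hmat : lap W * (lap W * Y - 1) = 0 := by
    rw [Matrix.mul_sub, Matrix.mul_one, hY.2.2, ← Matrix.mul_assoc, hY.1, sub_self]
  have hcol : ∀ k a b, (lap W * Y - 1) a k = (lap W * Y - 1) b k := by
    intro k
    apply ker_const W hsym hnn hconn
    funext i
    have h : (lap W).mulVec (fun a => (lap W * Y - 1) a k) i
        = (lap W * (lap W * Y - 1)) i k := by
      simp [Matrix.mulVec, dotProduct, Matrix.mul_apply]
    rw [h, hmat]
    simp
  refine ⟨fun k => (lap W * Y) k k - 1, fun k i => ?_⟩
  have := hcol k i k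
  simp only [Matrix.sub_apply, Matrix.one_apply] at this
  by_cases h : i = k <;> simp [h] at this ⊢ <;> linarith

lemma m_formula {n : ℕ} (W : Matrix (Fin n) (Fin n) ℝ)
    (hsym : ∀ i j, W i j = W j i) (hnn : ∀ i j, 0 ≤ W i j)
    (hconn : IsConnectedW W) (hrow : ∀ i, 0 < ∑ j, W i j)
    (m : Fin n → Fin n → ℝ)
    (hm : IsHittingTime (Matrix.of fun i j => W i j / ∑ k, W i k) m)
    (Y : Matrix (Fin n) (Fin n) ℝ) (hY : IsGroupInverse (lap W) Y) (j i : Fin n) :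
    m i j = (∑ k, Y i k * (∑ t, W k t)) - (∑ k, Y j k * (∑ t, W k t))
      - (∑ k, ∑ t, W k t) * Y i j + (∑ k, ∑ t, W k t) * Y j j := by
  set d : Fin n → ℝ := fun i => ∑ t, W i t with hd
  set vol : ℝ := ∑ k, d k with hvol
  set v : Fin n → ℝ := fun i => m i j with hv
  set u : Fin n → ℝ := (lap W).mulVec v with hu
  have hui : ∀ i, u i = d i * v i - ∑ k, W i k * v k := fun i => lap_mulVec W v i
  have hA : ∀ i, i ≠ j → u i = d i := by
    intro i hij
    have hdne : d i ≠ 0 := ne_of_gt (hrow i)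
    have hmi : v i = 1 + ∑ k, (W i k / d i) * v k := hm.2 i j hij
    have hsum : ∑ k, W i k * v k = d i * ∑ k, (W i k / d i) * v k := by
      rw [Finset.mul_sum]
      exact Finset.sum_congr rfl fun k _ => by field_simp
    rw [hui i, hsum]
    have : ∑ k, (W i k / d i) * v k = v i - 1 := by rw [hmi]; ring
    rw [this]; ring
  have hsumu : ∑ i, u i = 0 := by
    have e : ∑ i, u i = ∑ i, d i * v i - ∑ k, d k * v k := by
      rw [Finset.sum_congr rfl fun i _ => hui i, Finset.sum_sub_distrib]
      congr 1
      rw [Finset.sum_comm]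
      exact Finset.sum_congr rfl fun k _ => by
        rw [Finset.sum_mul]
        exact Finset.sum_congr rfl fun i _ => by rw [hsym]
    rw [e]; ring
  have huj : u j = d j - vol := by
    have h1 := Finset.add_sum_erase Finset.univ u (Finset.mem_univ j)
    have h2 := Finset.add_sum_erase Finset.univ d (Finset.mem_univ j)
    have h3 : ∑ i ∈ Finset.univ.erase j, u i = ∑ i ∈ Finset.univ.erase j, d i :=
      Finset.sum_congr rfl fun i hi => hA i (Finset.ne_of_mem_erase hi)
    rw [hvol]
    linarith [hsumu]
  have hufull : ∀ i, u i = d i - vol * (if i = j then 1 else 0) := by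
    intro i
    by_cases h : i = j
    · subst h; simp [huj]
    · simp [h, hA i h]
  have hYu : ∀ i, Y.mulVec u i = (∑ k, Y i k * d k) - vol * Y i j := by
    intro i
    have : Y.mulVec u i = ∑ k, Y i k * (d k - vol * (if k = j then 1 else 0)) := by
      simp only [Matrix.mulVec, dotProduct]
      exact Finset.sum_congr rfl fun k _ => by rw [hufull k]
    rw [this]
    have : ∀ k : Fin n, Y i k * (d k - vol * (if k = j then 1 else 0))
        = Y i k * d k - (if k = j then vol * Y i j else 0) := by
      intro k
      by_cases h : k = j
      · subst h; simp; ring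
      · simp [h]
    rw [Finset.sum_congr rfl fun k _ => this k, Finset.sum_sub_distrib,
      Finset.sum_ite_eq' Finset.univ j fun _ => vol * Y i j]
    simp
  obtain ⟨c, hc⟩ := LY_apply W Y hsym hnn hconn hY
  have hLY : ∀ i, Y.mulVec u i = v i + ∑ k, c k * v k := by
    intro i
    rw [hu, Matrix.mulVec_mulVec, ← hY.2.2]
    have : ((lap W * Y).mulVec v) i = ∑ k, ((if i = k then 1 else 0) + c k) * v k := by
      simp only [Matrix.mulVec, dotProduct]
      exact Finset.sum_congr rfl fun k _ => by rw [hc k i]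
    rw [this]
    simp only [add_mul, Finset.sum_add_distrib, ite_mul, one_mul, zero_mul]
    rw [Finset.sum_ite_eq Finset.univ i v]
    simp
  have hvj : v j = 0 := hm.1 j
  have keyi := (hLY i).symm.trans (hYu i)
  have keyj := (hLY j).symm.trans (hYu j)
  rw [hvj] at keyj
  have : v i = (∑ k, Y i k * d k) - vol * Y i j - ((∑ k, Y j k * d k) - vol * Y j j) := by
    linarith
  rw [hv] at this
  simp only [hd, hvol] at this ⊢
  rw [this]
  ring

/-- for the random walk on `G` with `T = (diag(W1))⁻¹·W`,
the commute times satisfy `C = (Σ_{k,t} w_kt)·Ω`. -/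
theorem stmt9 {n : ℕ} (hn : 0 < n) (W : Matrix (Fin n) (Fin n) ℝ)
    (hsym : ∀ i j, W i j = W j i) (hnn : ∀ i j, 0 ≤ W i j) (h0 : ∀ i, W i i = 0)
    (hconn : IsConnectedW W) (hrow : ∀ i, 0 < ∑ j, W i j)
    (m : Fin n → Fin n → ℝ)
    (hm : IsHittingTime (Matrix.of fun i j => W i j / ∑ k, W i k) m)
    (Y : Matrix (Fin n) (Fin n) ℝ) (hY : IsGroupInverse (lap W) Y) :
    ∀ i j, m i j + m j i = (∑ k, ∑ t, W k t) * (Y i i + Y j j - Y i j - Y j i) := by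
  intro i j
  have h1 := m_formula W hsym hnn hconn hrow m hm Y hY j i
  have h2 := m_formula W hsym hnn hconn hrow m hm Y hY i j
  rw [h1, h2]; ring
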